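/- Let E ∈ ℝ² with E ≠ 0, let R, X ∈ ℝ with X ≠ 0, and let Imax > 0. Define P(x) := (3/2)R‖x‖² + (3/2)⟨E,x⟩ and V(x) := (R² + X²)‖x‖² + 2⟨ZᵀE, x⟩ + ‖E‖² for x ∈ ℝ². Then the image set { (P(x), V(x)) : x ∈ ℝ², ‖x‖ ≤ Imax } is a convex subset of ℝ². -/

import Mathlib

open scoped RealInnerProductSpace

/-- The impedance matrix `Z` with rows `(R,-X)` and `(X,R)`. -/
def Zmat (R X : ℝ) : Matrix (Fin 2) (Fin 2) ℝ := !![R, -X; X, R]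

/-- Interpret a plain vector `Fin 2 → ℝ` as an element of Euclidean space `ℝ²`. -/
noncomputable def toE (v : Fin 2 → ℝ) : EuclideanSpace ℝ (Fin 2) := WithLp.toLp 2 v

/-- The vector `Zᵀ E ∈ ℝ²`. -/
noncomputable def ZtE (R X : ℝ) (E : EuclideanSpace ℝ (Fin 2)) : EuclideanSpace ℝ (Fin 2) :=
  toE ((Zmat R X).transpose.mulVec (fun i => E i))

lemma inner_eq (a b : EuclideanSpace ℝ (Fin 2)) : ⟪a,b⟫ = a 0 * b 0 + a 1 * b 1 := by
  simp [PiLp.inner_apply, Fin.sum_univ_two]; ring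

lemma norm_sq_eq (a : EuclideanSpace ℝ (Fin 2)) : ‖a‖^2 = a 0^2 + a 1^2 := by
  rw [← real_inner_self_eq_norm_sq, inner_eq]; ring

lemma ZtE0 (R X : ℝ) (E : EuclideanSpace ℝ (Fin 2)) : ZtE R X E 0 = R * E 0 + X * E 1 := by
  simp [ZtE, toE, Zmat, Matrix.mulVec, dotProduct, Fin.sum_univ_two]

lemma ZtE1 (R X : ℝ) (E : EuclideanSpace ℝ (Fin 2)) : ZtE R X E 1 = -X * E 0 + R * E 1 := by
  simp [ZtE, toE, Zmat, Matrix.mulVec, dotProduct, Fin.sum_univ_two]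

lemma key (e R X Imax : ℝ) (hX : X ≠ 0) (t u s : ℝ)
    (h1 : u^2 + s^2 ≤ e^2 * t) (h2 : t ≤ Imax^2) :
    ∃ t' u' s', u'^2 + s'^2 = e^2 * t' ∧ t' ≤ Imax^2 ∧
      R*t' + u' = R*t + u ∧
      (R^2+X^2)*t' + 2*R*u' + 2*X*s' = (R^2+X^2)*t + 2*R*u + 2*X*s := by
  set c : ℝ := (R^2 - X^2)/X with hc
  have hXc : X * c = R^2 - X^2 := by rw [hc]; field_simp
  set A : ℝ := 4*R^2 + c^2 with hA_def
  have hA : 0 < A := by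
    rcases eq_or_ne R 0 with hR | hR
    · have hcX : c = -X := by rw [hc, hR]; field_simp; ring
      rw [hA_def, hcX, hR]
      have hx2 : 0 < X^2 := by positivity
      nlinarith
    · have : 0 < R^2 := by positivity
      nlinarith [sq_nonneg c]
  set B : ℝ := 4*R*u - 2*c*s + 2*e^2 with hB
  set C : ℝ := u^2 + s^2 - e^2*t with hC
  have hC0 : C ≤ 0 := by rw [hC]; linarith
  set D : ℝ := B^2 - 4*A*C with hD
  have hD0 : 0 ≤ D := by nlinarith
  set L : ℝ := (-B + Real.sqrt D)/(2*A) with hL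
  have hsq : Real.sqrt D ^ 2 = D := Real.sq_sqrt hD0
  have hL0 : 0 ≤ L := by
    have hBs : B ≤ Real.sqrt D := by
      rcases le_or_gt B 0 with h | h
      · exact h.trans (Real.sqrt_nonneg D)
      · calc B = Real.sqrt (B^2) := (Real.sqrt_sq h.le).symm
          _ ≤ Real.sqrt D := Real.sqrt_le_sqrt (by nlinarith)
    apply div_nonneg (by linarith) (by linarith)
  have hroot : A*L^2 + B*L + C = 0 := by
    have h2A : (2*A) ≠ 0 := by positivity
    rw [hL]
    field_simp
    nlinarith [hsq]
  refine ⟨t - 2*L, u + 2*R*L, s - c*L, ?_, by linarith, by ring, ?_⟩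
  · have hexp : (u + 2*R*L)^2 + (s - c*L)^2 - e^2*(t - 2*L) = A*L^2 + B*L + C := by
      rw [hA_def, hB, hC]; ring
    linarith [hexp, hroot]
  · linear_combination (-2*L) * hXc

lemma mem_char (E : EuclideanSpace ℝ (Fin 2)) (hE : E ≠ 0) (R X : ℝ) (hX : X ≠ 0)
    (Imax : ℝ) (hI : 0 < Imax) (p : ℝ × ℝ) :
    (∃ x : EuclideanSpace ℝ (Fin 2), ‖x‖ ≤ Imax ∧
      p = ((3 / 2) * R * ‖x‖ ^ 2 + (3 / 2) * ⟪E, x⟫,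
           (R ^ 2 + X ^ 2) * ‖x‖ ^ 2 + 2 * ⟪ZtE R X E, x⟫ + ‖E‖ ^ 2)) ↔
    (∃ t u s : ℝ, u^2 + s^2 ≤ ‖E‖^2 * t ∧ t ≤ Imax^2 ∧
      p = ((3 / 2) * R * t + (3 / 2) * u,
           (R ^ 2 + X ^ 2) * t + 2 * (R*u + X*s) + ‖E‖ ^ 2)) := by
  have hEpos : (0:ℝ) < ‖E‖ := norm_pos_iff.mpr hE
  have he2 : ‖E‖^2 = E 0 ^2 + E 1 ^2 := norm_sq_eq E
  constructor
  · rintro ⟨x, hx, rfl⟩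
    refine ⟨‖x‖^2, ⟪E, x⟫, E 1 * x 0 - E 0 * x 1, ?_, ?_, ?_⟩
    · rw [inner_eq, norm_sq_eq E, norm_sq_eq x]
      apply le_of_eq; ring
    · nlinarith [norm_nonneg x]
    · rw [inner_eq, inner_eq, ZtE0, ZtE1]
      simp only [Prod.mk.injEq]
      constructor
      · trivial
      · ring
  · rintro ⟨t, u, s, h1, h2, rfl⟩
    obtain ⟨t', u', s', heq, ht', hP, hV⟩ := key ‖E‖ R X Imax hX t u s h1 h2
    have he2pos : (0:ℝ) < E 0 ^2 + E 1 ^2 := by rw [← he2]; positivity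
    have he2ne : E 0 ^2 + E 1 ^2 ≠ 0 := ne_of_gt he2pos
    set x : EuclideanSpace ℝ (Fin 2) :=
      toE ![ (u' * E 0 + s' * E 1)/(E 0 ^2 + E 1 ^2),
             (u' * E 1 - s' * E 0)/(E 0 ^2 + E 1 ^2) ] with hxdef
    have hx0 : x 0 = (u' * E 0 + s' * E 1)/(E 0 ^2 + E 1 ^2) := rfl
    have hx1 : x 1 = (u' * E 1 - s' * E 0)/(E 0 ^2 + E 1 ^2) := rfl
    have hnx : ‖x‖^2 = t' := by
      rw [norm_sq_eq, hx0, hx1]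
      rw [he2] at heq
      field_simp
      linear_combination (E 0 ^2 + E 1 ^2) * heq
    have hu : ⟪E, x⟫ = u' := by
      rw [inner_eq, hx0, hx1]
      field_simp; ring
    have hz : ⟪ZtE R X E, x⟫ = R*u' + X*s' := by
      rw [inner_eq, ZtE0, ZtE1, hx0, hx1]
      field_simp; ring
    refine ⟨x, ?_, ?_⟩
    · nlinarith [norm_nonneg x, hI.le]
    · rw [hnx, hu, hz]
      simp only [Prod.mk.injEq]
      constructor
      · linear_combination (-3/2 : ℝ) * hP
      · linear_combination -hV

/-- the feasible `(P, V²)` output region of a current-limited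
grid-connected converter is convex (here `X ≠ 0`). -/
theorem stmt3 (E : EuclideanSpace ℝ (Fin 2)) (hE : E ≠ 0) (R X : ℝ) (hX : X ≠ 0)
    (Imax : ℝ) (hI : 0 < Imax) :
    Convex ℝ {p : ℝ × ℝ | ∃ x : EuclideanSpace ℝ (Fin 2), ‖x‖ ≤ Imax ∧
      p = ((3 / 2) * R * ‖x‖ ^ 2 + (3 / 2) * ⟪E, x⟫,
           (R ^ 2 + X ^ 2) * ‖x‖ ^ 2 + 2 * ⟪ZtE R X E, x⟫ + ‖E‖ ^ 2)} := by
  intro p hp q hq a b ha hb hab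
  rw [Set.mem_setOf_eq, mem_char E hE R X hX Imax hI] at hp hq ⊢
  obtain ⟨t1, u1, s1, h11, h12, rfl⟩ := hp
  obtain ⟨t2, u2, s2, h21, h22, rfl⟩ := hq
  refine ⟨a*t1 + b*t2, a*u1 + b*u2, a*s1 + b*s2, ?_, ?_, ?_⟩
  · nlinarith [mul_nonneg ha hb, sq_nonneg (u1 - u2), sq_nonneg (s1 - s2),
      mul_le_mul_of_nonneg_left h11 ha, mul_le_mul_of_nonneg_left h21 hb]
  · nlinarith [mul_le_mul_of_nonneg_left h12 ha, mul_le_mul_of_nonneg_left h22 hb]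
  · simp only [Prod.smul_mk, Prod.mk_add_mk, smul_eq_mul, Prod.mk.injEq]
    constructor
    · ring
    · linear_combination (‖E‖^2 : ℝ) * hab
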